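/- Let E be a finite-dimensional real inner product space, f : E → ℝ convex and continuous, λ > 0, let C_1, …, C_N ⊆ E be nonempty closed convex sets, and let γ_1, …, γ_N ∈ [0,1] with Σ_{n=1}^N γ_n < 1. Define Φ(x) = λ f(x) + (1/2) Σ_{n=1}^N γ_n (Metric.infDist x C_n)², and assume Φ attains its minimum over E. Let (x_k) be any sequence such that for every k, x_{k+1} minimizes z ↦ λ f(z) + (1/2)‖z − (x_k − Σ_{n=1}^N γ_n (x_k − P_{C_n} x_k))‖² over E. Then (x_k) converges to a point x* that minimizes Φ over E. (Convex-set instance of the paper's convergence proposition for the deterministic FiRe-HQS algorithm.) -/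

import Mathlib

open Metric Finset Filter Topology
local notation "⟪" x ", " y "⟫" => @inner ℝ _ _ x y

private lemma le_aux {a b c : ℝ} (hc : 0 ≤ c)
    (h : ∀ t : ℝ, 0 < t → t ≤ 1 → a ≤ b + t * c) : a ≤ b := by
  refine le_of_forall_pos_le_add fun ε hε => ?_
  have hden : 0 < c + 1 := by linarith
  have ht0 : 0 < min 1 (ε / (c + 1)) := lt_min one_pos (div_pos hε hden)
  have h1 := h _ ht0 (min_le_left _ _)
  have h2 : min 1 (ε / (c + 1)) * c ≤ ε := by
    have hm : min 1 (ε / (c + 1)) ≤ ε / (c + 1) := min_le_right _ _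
    calc min 1 (ε / (c+1)) * c ≤ (ε / (c+1)) * c := mul_le_mul_of_nonneg_right hm hc
      _ ≤ ε := by rw [div_mul_eq_mul_div, div_le_iff₀ hden]; nlinarith
  linarith

private lemma norm_le_of_sq {a b : ℝ} (ha : 0 ≤ a) (hb : 0 ≤ b) (h : a^2 ≤ b^2) : a ≤ b := by
  nlinarith

private lemma vi_aux {E : Type*} [NormedAddCommGroup E] [InnerProductSpace ℝ E]
    {C : Set E} (hconv : Convex ℝ C) {v p : E} (hp : p ∈ C)
    (hd : ‖v - p‖ = Metric.infDist v C) {c : E} (hc : c ∈ C) :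
    ⟪v - p, c - p⟫ ≤ 0 := by
  have h1 : ‖v - p‖ = ⨅ w : C, ‖v - w‖ := by
    rw [hd, Metric.infDist_eq_iInf]
    congr 1; ext w; exact dist_eq_norm _ _
  exact (norm_eq_iInf_iff_real_inner_le_zero hconv hp).mp h1 c hc

private lemma low_aux {E : Type*} [NormedAddCommGroup E] [InnerProductSpace ℝ E]
    {C : Set E} (hconv : Convex ℝ C) {v w p q : E} (hp : p ∈ C) (hq : q ∈ C)
    (hdv : ‖v - p‖ = Metric.infDist v C) (hdw : ‖w - q‖ = Metric.infDist w C) :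
    (1/2) * (Metric.infDist v C)^2 + ⟪v - p, w - v⟫ ≤ (1/2) * (Metric.infDist w C)^2 := by
  rw [← hdv, ← hdw]
  have hvi : ⟪v - p, q - p⟫ ≤ (0:ℝ) := vi_aux hconv hp hdv hq
  have he1 : ‖(w - q) - (v - p)‖^2 = ‖w - q‖^2 - 2 * ⟪w - q, v - p⟫ + ‖v - p‖^2 :=
    norm_sub_sq_real _ _
  have hdecomp : w - q = (w - v) + ((v - p) - (q - p)) := by abel
  have e2 : ⟪w - q, v - p⟫ = ⟪v - p, w - v⟫ + ‖v - p‖^2 - ⟪v - p, q - p⟫ := by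
    have e0 : ⟪v - p, v - p⟫ = ‖v - p‖^2 := real_inner_self_eq_norm_sq _
    rw [inner_sub_right] at e0
    rw [real_inner_comm, hdecomp]
    simp only [inner_add_right, inner_sub_right]
    linarith
  nlinarith [sq_nonneg ‖(w - q) - (v - p)‖]

private lemma up_aux {E : Type*} [NormedAddCommGroup E] [InnerProductSpace ℝ E]
    {C : Set E} {v w p : E} (hp : p ∈ C)
    (hdv : ‖v - p‖ = Metric.infDist v C) :
    (1/2) * (Metric.infDist w C)^2 ≤
      (1/2) * (Metric.infDist v C)^2 + ⟪v - p, w - v⟫ + (1/2) * ‖w - v‖^2 := by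
  have h1 : Metric.infDist w C ≤ ‖w - p‖ := by
    rw [← dist_eq_norm]; exact Metric.infDist_le_dist_of_mem hp
  have h2 : (Metric.infDist w C)^2 ≤ ‖w - p‖^2 :=
    pow_le_pow_left₀ Metric.infDist_nonneg h1 2
  have hdecomp : w - p = (w - v) + (v - p) := by abel
  have h3 : ‖w - p‖^2 = ‖w - v‖^2 + 2 * ⟪w - v, v - p⟫ + ‖v - p‖^2 := by
    rw [hdecomp]; exact norm_add_sq_real _ _
  have h4 : ⟪w - v, v - p⟫ = ⟪v - p, w - v⟫ := real_inner_comm _ _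
  rw [← hdv]
  linarith




/-- Convergence of the deterministic FiRe-HQS algorithm (convex-set instance): in a
finite-dimensional real inner product space, for `f` convex continuous, `λ > 0`,
nonempty closed convex sets `C_1, …, C_N` with metric projections `P n`, weights
`γ_n ∈ [0,1]` with `Σ γ_n < 1`, and objective
`Φ(x) = λ f(x) + (1/2) Σ_n γ_n (infDist x (C n))²` attaining its minimum, any sequence
satisfying the FiRe-HQS iteration `x_{k+1} = prox_{λf}(x_k − Σ_n γ_n (x_k − P_n x_k))`
converges to a minimizer of `Φ`. -/
theorem fire_hqs_converges
    {E : Type*} [NormedAddCommGroup E] [InnerProductSpace ℝ E] [FiniteDimensional ℝ E]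
    (f : E → ℝ) (hf : ConvexOn ℝ Set.univ f) (hfc : Continuous f)
    (lam : ℝ) (hlam : 0 < lam)
    (N : ℕ) (C : Fin N → Set E)
    (hne : ∀ n, (C n).Nonempty) (hcl : ∀ n, IsClosed (C n)) (hconv : ∀ n, Convex ℝ (C n))
    (gamma : Fin N → ℝ) (hγ0 : ∀ n, 0 ≤ gamma n) (hγ1 : ∀ n, gamma n ≤ 1)
    (hγs : ∑ n, gamma n < 1)
    (P : Fin N → E → E) (hPC : ∀ n x, P n x ∈ C n)
    (hP : ∀ n x, ‖x - P n x‖ = Metric.infDist x (C n))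
    (Φ : E → ℝ)
    (hΦ : ∀ x : E,
      Φ x = lam * f x + (1 / 2 : ℝ) * ∑ n, gamma n * (Metric.infDist x (C n)) ^ 2)
    (hmin : ∃ z : E, ∀ w : E, Φ z ≤ Φ w)
    (x : ℕ → E)
    (hx : ∀ k : ℕ, ∀ w : E,
      lam * f (x (k + 1)) +
          (1 / 2 : ℝ) * ‖x (k + 1) - (x k - ∑ n, gamma n • (x k - P n (x k)))‖ ^ 2 ≤
        lam * f w +
          (1 / 2 : ℝ) * ‖w - (x k - ∑ n, gamma n • (x k - P n (x k)))‖ ^ 2) :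
    ∃ xs : E, Filter.Tendsto x Filter.atTop (nhds xs) ∧ ∀ w : E, Φ xs ≤ Φ w := by
  classical
  obtain ⟨z, hz⟩ := hmin
  set L : ℝ := ∑ n, gamma n with hL
  have hL0 : 0 ≤ L := Finset.sum_nonneg fun n _ => hγ0 n
  have hL1 : L < 1 := hγs
  set g : E → ℝ := fun v => (1/2 : ℝ) * ∑ n, gamma n * (Metric.infDist v (C n))^2 with hgdef
  set G : E → E := fun v => ∑ n, gamma n • (v - P n v) with hGdef
  have hΦ' : ∀ v, Φ v = lam * f v + g v := by
    intro v; rw [hΦ v]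
  have hGinner : ∀ v u : E, ⟪G v, u⟫ = ∑ n, gamma n * ⟪v - P n v, u⟫ := by
    intro v u
    simp only [hGdef]
    rw [sum_inner]
    exact Finset.sum_congr rfl fun n _ => real_inner_smul_left _ _ _
  -- lower bound (convexity of g)
  have hg_low : ∀ v w : E, g v + ⟪G v, w - v⟫ ≤ g w := by
    intro v w
    have h2 : ∑ n, gamma n * ((1/2) * (Metric.infDist v (C n))^2 + ⟪v - P n v, w - v⟫)
        ≤ ∑ n, gamma n * ((1/2) * (Metric.infDist w (C n))^2) :=
      Finset.sum_le_sum fun n _ => mul_le_mul_of_nonneg_left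
        (low_aux (hconv n) (hPC n v) (hPC n w) (hP n v) (hP n w)) (hγ0 n)
    have e1 : g v + ⟪G v, w - v⟫
        = ∑ n, gamma n * ((1/2) * (Metric.infDist v (C n))^2 + ⟪v - P n v, w - v⟫) := by
      rw [hGinner]
      simp only [hgdef, Finset.mul_sum, ← Finset.sum_add_distrib]
      exact Finset.sum_congr rfl fun n _ => by ring
    have e2 : g w = ∑ n, gamma n * ((1/2) * (Metric.infDist w (C n))^2) := by
      simp only [hgdef, Finset.mul_sum]
      exact Finset.sum_congr rfl fun n _ => by ring
    rw [e1, e2]; exact h2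
  -- upper bound (descent lemma)
  have hg_up : ∀ v w : E, g w ≤ g v + ⟪G v, w - v⟫ + L * ((1/2) * ‖w - v‖^2) := by
    intro v w
    have h2 : ∑ n, gamma n * ((1/2) * (Metric.infDist w (C n))^2)
        ≤ ∑ n, gamma n * ((1/2) * (Metric.infDist v (C n))^2 + ⟪v - P n v, w - v⟫
            + (1/2) * ‖w - v‖^2) :=
      Finset.sum_le_sum fun n _ => mul_le_mul_of_nonneg_left
        (up_aux (hPC n v) (hP n v)) (hγ0 n)
    have e1 : g v + ⟪G v, w - v⟫ + L * ((1/2) * ‖w - v‖^2)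
        = ∑ n, gamma n * ((1/2) * (Metric.infDist v (C n))^2 + ⟪v - P n v, w - v⟫
            + (1/2) * ‖w - v‖^2) := by
      rw [hGinner]
      simp only [hgdef, hL, Finset.mul_sum, Finset.sum_mul, ← Finset.sum_add_distrib]
      exact Finset.sum_congr rfl fun n _ => by ring
    have e2 : g w = ∑ n, gamma n * ((1/2) * (Metric.infDist w (C n))^2) := by
      simp only [hgdef, Finset.mul_sum]
      exact Finset.sum_congr rfl fun n _ => by ring
    rw [e1, e2]; exact h2
  -- prox subgradient inequality
  have hprox : ∀ (k : ℕ) (w : E),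
      lam * f (x (k+1)) + ⟪(x k - G (x k)) - x (k+1), w - x (k+1)⟫ ≤ lam * f w := by
    intro k w
    set u := x (k+1) with hu
    set y := x k - G (x k) with hy
    apply le_aux (c := (1/2) * ‖w - u‖^2) (by positivity)
    intro t ht0 ht1
    have hxk := hx k (u + t • (w - u))
    have hyeq : x k - ∑ n, gamma n • (x k - P n (x k)) = y := by
      rw [hy]
    rw [hyeq] at hxk
    have hconvf : f (u + t • (w - u)) ≤ (1 - t) * f u + t * f w := by
      have h1 := hf.2 (Set.mem_univ u) (Set.mem_univ w)
        (by linarith : (0:ℝ) ≤ 1 - t) (le_of_lt ht0) (by ring)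
      have he : u + t • (w - u) = (1 - t) • u + t • w := by
        rw [smul_sub, sub_smul, one_smul]; abel
      rw [he]; exact h1
    have hexp : ‖u + t • (w - u) - y‖^2
        = ‖u - y‖^2 + 2 * (t * ⟪u - y, w - u⟫) + t^2 * ‖w - u‖^2 := by
      have he : u + t • (w - u) - y = (u - y) + t • (w - u) := by abel
      rw [he, norm_add_sq_real, real_inner_smul_right, norm_smul, Real.norm_eq_abs,
        abs_of_pos ht0, mul_pow]
    have hflam : lam * f (u + t • (w - u)) ≤ lam * ((1 - t) * f u + t * f w) :=
      mul_le_mul_of_nonneg_left hconvf hlam.le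
    have comb : t * (lam * f u) ≤ t * (lam * f w + ⟪u - y, w - u⟫ + (t/2) * ‖w - u‖^2) := by
      nlinarith [hxk, hflam, hexp]
    have hdiv : lam * f u ≤ lam * f w + ⟪u - y, w - u⟫ + (t/2) * ‖w - u‖^2 :=
      (mul_le_mul_iff_right₀ ht0).mp comb
    have hiyu : ⟪y - u, w - u⟫ = -⟪u - y, w - u⟫ := by
      rw [← neg_sub u y, inner_neg_left]
    rw [hiyu]; linarith
  -- main Fejér-type inequality
  have h6 : ∀ (k : ℕ) (w : E),
      Φ (x (k+1)) + (1/2) * ‖x (k+1) - w‖^2 + ((1-L)/2) * ‖x (k+1) - x k‖^2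
        ≤ Φ w + (1/2) * ‖x k - w‖^2 := by
    intro k w
    set u := x (k+1) with hu
    set v := x k with hv
    have h1 := hg_up v u
    have h2 := hg_low v w
    have h3 := hprox k w
    have hsplit : ⟪G v, u - v⟫ - ⟪G v, w - v⟫ - ⟪(v - G v) - u, w - u⟫
        = ⟪v - u, u - w⟫ := by
      simp only [inner_sub_left, inner_sub_right]; ring
    have hpar : 2 * ⟪v - u, u - w⟫ = ‖v - w‖^2 - ‖v - u‖^2 - ‖u - w‖^2 := by
      have he : v - w = (v - u) + (u - w) := by abel
      rw [he, norm_add_sq_real]; ring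
    have hrev2 : ‖v - u‖^2 = ‖u - v‖^2 := by rw [norm_sub_rev]
    rw [hΦ' u, hΦ' w]
    linarith
  have hzle : ∀ k, Φ z ≤ Φ (x k) := fun k => hz _
  -- distance decrease toward any point below all iterate values
  have hdist_dec : ∀ (w : E), (∀ k, Φ w ≤ Φ (x k)) → ∀ k, ‖x (k+1) - w‖ ≤ ‖x k - w‖ := by
    intro w hwle k
    have h := h6 k w
    have hnn : 0 ≤ ((1-L)/2) * ‖x (k+1) - x k‖^2 :=
      mul_nonneg (by linarith) (by positivity)
    exact norm_le_of_sq (norm_nonneg _) (norm_nonneg _) (by nlinarith [hwle (k+1)])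
  have hmono : ∀ k, Φ (x (k+1)) ≤ Φ (x k) := by
    intro k
    have h := h6 k (x k)
    have h0 : ‖x k - x k‖ = 0 := by simp
    have hnn : 0 ≤ ((1-L)/2) * ‖x (k+1) - x k‖^2 :=
      mul_nonneg (by linarith) (by positivity)
    nlinarith [sq_nonneg ‖x (k+1) - x k‖]
  have hanti : Antitone fun k => Φ (x k) := antitone_nat_of_succ_le hmono
  -- telescoping bound
  have htel : ∀ m : ℕ, ∑ k ∈ Finset.range m, (Φ (x (k+1)) - Φ z) ≤ (1/2) * ‖x 0 - z‖^2 := by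
    intro m
    have hb : ∀ k ∈ Finset.range m,
        Φ (x (k+1)) - Φ z ≤ (1/2) * ‖x k - z‖^2 - (1/2) * ‖x (k+1) - z‖^2 := by
      intro k _
      have h := h6 k z
      have hnn : 0 ≤ ((1-L)/2) * ‖x (k+1) - x k‖^2 :=
        mul_nonneg (by linarith) (by positivity)
      linarith
    calc ∑ k ∈ Finset.range m, (Φ (x (k+1)) - Φ z)
        ≤ ∑ k ∈ Finset.range m, ((1/2) * ‖x k - z‖^2 - (1/2) * ‖x (k+1) - z‖^2) :=
          Finset.sum_le_sum hb
      _ = (1/2) * ‖x 0 - z‖^2 - (1/2) * ‖x m - z‖^2 :=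
          Finset.sum_range_sub' (fun k => (1/2) * ‖x k - z‖^2) m
      _ ≤ (1/2) * ‖x 0 - z‖^2 := by nlinarith [sq_nonneg ‖x m - z‖]
  have hrate : ∀ m : ℕ, ((m:ℝ)+1) * (Φ (x (m+1)) - Φ z) ≤ (1/2) * ‖x 0 - z‖^2 := by
    intro m
    have h1 : ∀ k ∈ Finset.range (m+1), Φ (x (m+1)) - Φ z ≤ Φ (x (k+1)) - Φ z := by
      intro k hk
      have hk' : k + 1 ≤ m + 1 := Nat.succ_le_succ (Nat.lt_succ_iff.mp (Finset.mem_range.mp hk))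
      have := hanti hk'
      simpa using sub_le_sub_right this (Φ z)
    calc ((m:ℝ)+1) * (Φ (x (m+1)) - Φ z)
        = ∑ _k ∈ Finset.range (m+1), (Φ (x (m+1)) - Φ z) := by
          rw [Finset.sum_const, Finset.card_range, nsmul_eq_mul]; push_cast; ring
      _ ≤ ∑ k ∈ Finset.range (m+1), (Φ (x (k+1)) - Φ z) := Finset.sum_le_sum h1
      _ ≤ (1/2) * ‖x 0 - z‖^2 := htel (m+1)
  -- Φ (x m) → Φ z
  have hΦtend : Tendsto (fun m => Φ (x m)) atTop (𝓝 (Φ z)) := by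
    have key : Tendsto (fun m : ℕ => Φ (x (m+1)) - Φ z) atTop (𝓝 0) := by
      apply squeeze_zero (fun m => by linarith [hzle (m+1)])
        (g := fun m : ℕ => ((1/2) * ‖x 0 - z‖^2) / ((m:ℝ)+1))
      · intro m
        have hm : (0:ℝ) < (m:ℝ)+1 := by positivity
        rw [le_div_iff₀ hm]
        nlinarith [hrate m]
      · have hden : Tendsto (fun m : ℕ => ((m:ℝ)+1)) atTop atTop :=
          tendsto_atTop_add_const_right _ 1 tendsto_natCast_atTop_atTop
        exact Tendsto.div_atTop tendsto_const_nhds hden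
    have key2 : Tendsto (fun m : ℕ => Φ (x m) - Φ z) atTop (𝓝 0) :=
      (tendsto_add_atTop_iff_nat 1).mp key
    have := key2.add_const (Φ z)
    simpa using this
  -- bounded iterates, extract convergent subsequence
  have hzanti : Antitone fun k => ‖x k - z‖ := antitone_nat_of_succ_le (hdist_dec z hzle)
  have hball : ∀ k, x k ∈ Metric.closedBall z ‖x 0 - z‖ := by
    intro k
    rw [Metric.mem_closedBall, dist_eq_norm]
    exact hzanti (Nat.zero_le k)
  obtain ⟨xs, _hxs_mem, φ, hφ, hφtend⟩ := (isCompact_closedBall z _).tendsto_subseq hball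
  -- Φ continuous
  have hΦc : Continuous Φ := by
    have heq : Φ = fun v => lam * f v
        + (1 / 2 : ℝ) * ∑ n, gamma n * (Metric.infDist v (C n)) ^ 2 := funext hΦ
    rw [heq]
    refine Continuous.add (continuous_const.mul hfc) (Continuous.mul continuous_const ?_)
    refine continuous_finset_sum _ fun n _ => ?_
    exact continuous_const.mul ((Metric.continuous_infDist_pt (C n)).pow 2)
  have hlim1 : Tendsto (fun j => Φ (x (φ j))) atTop (𝓝 (Φ xs)) :=
    (hΦc.tendsto xs).comp hφtend
  have hlim2 : Tendsto (fun j => Φ (x (φ j))) atTop (𝓝 (Φ z)) :=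
    hΦtend.comp hφ.tendsto_atTop
  have hΦxs : Φ xs = Φ z := tendsto_nhds_unique hlim1 hlim2
  have hxsmin : ∀ w, Φ xs ≤ Φ w := fun w => hΦxs ▸ hz w
  -- distances to xs decrease, subsequence → 0, hence convergence
  have hxanti : Antitone fun k => ‖x k - xs‖ :=
    antitone_nat_of_succ_le (hdist_dec xs fun k => hxsmin _)
  have hbdd : BddBelow (Set.range fun k => ‖x k - xs‖) := by
    refine ⟨0, ?_⟩
    rintro r ⟨k, rfl⟩
    positivity
  have hlim : Tendsto (fun k => ‖x k - xs‖) atTop (𝓝 (⨅ k, ‖x k - xs‖)) :=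
    tendsto_atTop_ciInf hxanti hbdd
  have hsub0 : Tendsto (fun j => ‖x (φ j) - xs‖) atTop (𝓝 0) := by
    have := tendsto_iff_norm_sub_tendsto_zero.mp hφtend
    simpa using this
  have hsubinf : Tendsto (fun j => ‖x (φ j) - xs‖) atTop (𝓝 (⨅ k, ‖x k - xs‖)) :=
    hlim.comp hφ.tendsto_atTop
  have hinf0 : (⨅ k, ‖x k - xs‖) = 0 := tendsto_nhds_unique hsubinf hsub0
  refine ⟨xs, ?_, hxsmin⟩
  rw [tendsto_iff_norm_sub_tendsto_zero]
  exact hinf0 ▸ hlim
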